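/- For t ∈ ℝ let Ψ(t) be the 2×2 complex matrix (rows indexed by α ∈ {0,1}, columns by {+,−}) with Ψ(t)₀₊ = exp(-t/4)/√2, Ψ(t)₀₋ = −i·exp(-t/4)/√2, Ψ(t)₁₊ = exp(t/4)/√2, Ψ(t)₁₋ = i·exp(t/4)/√2; let U(t) be the diagonal matrix diag(2·exp(t/2), −2·exp(t/2)); and let R₁(t) = (1/16)·exp(-t/2)·[[−1, 2i],[2i, 1]]. Then for all t: (i) Ψ(t)⁻¹·Ψ'(t) = (1/4)·[[0, i],[−i, 0]]; (ii) Ψ(t)⁻¹·Ψ'(t) = [U'(t), R₁(t)] (matrix commutator); and (iii) the two diagonal entries of R₁'(t) + Ψ(t)⁻¹·Ψ'(t)·R₁(t) vanish. -/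

import Mathlib

open Complex

/-- The transition matrix `Ψ(t)` from the flat basis to the normalized
idempotent basis of the quantum cohomology of ℙ¹ (rows indexed by `α ∈ {0,1}`,
columns by `{+,−}` as `{0,1}`). -/
noncomputable def PsiM (t : ℝ) : Matrix (Fin 2) (Fin 2) ℂ :=
  !![((Real.exp (-t / 4) / Real.sqrt 2 : ℝ) : ℂ),
       -Complex.I * ((Real.exp (-t / 4) / Real.sqrt 2 : ℝ) : ℂ);
     ((Real.exp (t / 4) / Real.sqrt 2 : ℝ) : ℂ),
       Complex.I * ((Real.exp (t / 4) / Real.sqrt 2 : ℝ) : ℂ)]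

/-- `U(t) = diag(2·exp(t/2), −2·exp(t/2))`, the diagonal matrix of canonical
coordinates (only its derivative enters). -/
noncomputable def UM (t : ℝ) : Matrix (Fin 2) (Fin 2) ℂ :=
  !![((2 * Real.exp (t / 2) : ℝ) : ℂ), 0;
     0, -((2 * Real.exp (t / 2) : ℝ) : ℂ)]

/-- `R₁(t) = (1/16)·exp(-t/2)·[[−1, 2i],[2i, 1]]`. -/
noncomputable def R1M (t : ℝ) : Matrix (Fin 2) (Fin 2) ℂ :=
  (((Real.exp (-t / 2) : ℝ) : ℂ) / 16) •
    !![-1, 2 * Complex.I; 2 * Complex.I, 1]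

set_option maxHeartbeats 1000000

section aux
variable (t : ℝ)

lemma hdA : HasDerivAt (fun s : ℝ => ((Real.exp (-s / 4) / Real.sqrt 2 : ℝ) : ℂ))
    ((Real.exp (-t / 4) * (-1/4) / Real.sqrt 2 : ℝ) : ℂ) t := by
  have hlin : HasDerivAt (fun s : ℝ => -s / 4) ((-1/4) : ℝ) t := by
    simpa using ((hasDerivAt_id t).neg.div_const 4)
  exact ((hlin.exp).div_const (Real.sqrt 2)).ofReal_comp

lemma hdB : HasDerivAt (fun s : ℝ => ((Real.exp (s / 4) / Real.sqrt 2 : ℝ) : ℂ))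
    ((Real.exp (t / 4) * (1/4) / Real.sqrt 2 : ℝ) : ℂ) t := by
  have hlin : HasDerivAt (fun s : ℝ => s / 4) ((1/4) : ℝ) t := by
    simpa using ((hasDerivAt_id t).div_const 4)
  exact ((hlin.exp).div_const (Real.sqrt 2)).ofReal_comp

lemma hdU : HasDerivAt (fun s : ℝ => ((2 * Real.exp (s / 2) : ℝ) : ℂ))
    ((2 * (Real.exp (t / 2) * (1/2)) : ℝ) : ℂ) t := by
  have hlin : HasDerivAt (fun s : ℝ => s / 2) ((1/2) : ℝ) t := by
    simpa using ((hasDerivAt_id t).div_const 2)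
  exact ((hlin.exp).const_mul 2).ofReal_comp

lemma hdR (c : ℂ) : HasDerivAt (fun s : ℝ => (((Real.exp (-s / 2) : ℝ) : ℂ) / 16) * c)
    (((Real.exp (-t / 2) * (-1/2) : ℝ) : ℂ) / 16 * c) t := by
  have hlin : HasDerivAt (fun s : ℝ => -s / 2) ((-1/2) : ℝ) t := by
    simpa using ((hasDerivAt_id t).neg.div_const 2)
  exact (((hlin.exp).ofReal_comp.div_const 16).mul_const c)

end aux

set_option maxHeartbeats 1000000 in
/-- With `Ψ'`, `U'`, `R₁'` the (entrywise) derivatives of `Ψ`, `U`, `R₁`, for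
all `t`: (i) `Ψ⁻¹·Ψ' = (1/4)·[[0,i],[−i,0]]`; (ii) `Ψ⁻¹·Ψ' = [U', R₁]`; and
(iii) the diagonal entries of `R₁' + Ψ⁻¹·Ψ'·R₁` vanish. -/
theorem stmt7 (Psi' U' R1' : ℝ → Matrix (Fin 2) (Fin 2) ℂ)
    (hPsi : ∀ (t : ℝ) (i j : Fin 2), HasDerivAt (fun s => PsiM s i j) (Psi' t i j) t)
    (hU : ∀ (t : ℝ) (i j : Fin 2), HasDerivAt (fun s => UM s i j) (U' t i j) t)
    (hR1 : ∀ (t : ℝ) (i j : Fin 2), HasDerivAt (fun s => R1M s i j) (R1' t i j) t) :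
    ∀ t : ℝ,
      (PsiM t)⁻¹ * Psi' t = (1 / 4 : ℂ) • !![0, Complex.I; -Complex.I, 0] ∧
      (PsiM t)⁻¹ * Psi' t = U' t * R1M t - R1M t * U' t ∧
      (R1' t + (PsiM t)⁻¹ * Psi' t * R1M t) 0 0 = 0 ∧
      (R1' t + (PsiM t)⁻¹ * Psi' t * R1M t) 1 1 = 0 := by
  intro t
  -- explicit values of derivatives
  have hP : Psi' t = !![((Real.exp (-t / 4) * (-1/4) / Real.sqrt 2 : ℝ) : ℂ),
      -Complex.I * ((Real.exp (-t / 4) * (-1/4) / Real.sqrt 2 : ℝ) : ℂ);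
      ((Real.exp (t / 4) * (1/4) / Real.sqrt 2 : ℝ) : ℂ),
      Complex.I * ((Real.exp (t / 4) * (1/4) / Real.sqrt 2 : ℝ) : ℂ)] := by
    ext i j
    fin_cases i <;> fin_cases j
    · exact (hPsi t 0 0).unique (by simpa [PsiM] using hdA t)
    · exact (hPsi t 0 1).unique (by simpa [PsiM] using (hdA t).const_mul (-Complex.I))
    · exact (hPsi t 1 0).unique (by simpa [PsiM] using hdB t)
    · exact (hPsi t 1 1).unique (by simpa [PsiM] using (hdB t).const_mul Complex.I)
  have hUval : U' t = !![((2 * (Real.exp (t / 2) * (1/2)) : ℝ) : ℂ), 0;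
      0, -((2 * (Real.exp (t / 2) * (1/2)) : ℝ) : ℂ)] := by
    ext i j
    fin_cases i <;> fin_cases j
    · exact (hU t 0 0).unique (by simpa [UM] using hdU t)
    · exact (hU t 0 1).unique (by simpa [UM] using hasDerivAt_const t (0:ℂ))
    · exact (hU t 1 0).unique (by simpa [UM] using hasDerivAt_const t (0:ℂ))
    · exact (hU t 1 1).unique (by simpa [UM, Pi.neg_def] using (hdU t).neg)
  have hRval : R1' t = !![((Real.exp (-t / 2) * (-1/2) : ℝ) : ℂ) / 16 * (-1),
      ((Real.exp (-t / 2) * (-1/2) : ℝ) : ℂ) / 16 * (2 * Complex.I);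
      ((Real.exp (-t / 2) * (-1/2) : ℝ) : ℂ) / 16 * (2 * Complex.I),
      ((Real.exp (-t / 2) * (-1/2) : ℝ) : ℂ) / 16 * 1] := by
    ext i j
    fin_cases i <;> fin_cases j
    · exact (hR1 t 0 0).unique (by simpa [R1M] using hdR t (-1))
    · exact (hR1 t 0 1).unique (by simpa [R1M] using hdR t (2 * Complex.I))
    · exact (hR1 t 1 0).unique (by simpa [R1M] using hdR t (2 * Complex.I))
    · exact (hR1 t 1 1).unique (by simpa [R1M] using hdR t 1)
  -- inverse of PsiM
  have hs2 : ((Real.sqrt 2 : ℝ) : ℂ) * ((Real.sqrt 2 : ℝ) : ℂ) = 2 := by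
    rw [← ofReal_mul]
    norm_num [Real.mul_self_sqrt]
  have hsne : ((Real.sqrt 2 : ℝ) : ℂ) ≠ 0 := by
    simp [Real.sqrt_eq_zero']
  have he1 : ((Real.exp (-t / 4) : ℝ) : ℂ) * ((Real.exp (t / 4) : ℝ) : ℂ) = 1 := by
    rw [← ofReal_mul, ← Real.exp_add, show -t/4 + t/4 = 0 by ring, Real.exp_zero, ofReal_one]
  have he2 : ((Real.exp (-t / 2) : ℝ) : ℂ) = ((Real.exp (-t / 4) : ℝ) : ℂ) * ((Real.exp (-t / 4) : ℝ) : ℂ) := by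
    rw [← ofReal_mul, ← Real.exp_add, show -t/4 + -t/4 = -t/2 by ring]
  have he3 : ((Real.exp (t / 2) : ℝ) : ℂ) = ((Real.exp (t / 4) : ℝ) : ℂ) * ((Real.exp (t / 4) : ℝ) : ℂ) := by
    rw [← ofReal_mul, ← Real.exp_add, show t/4 + t/4 = t/2 by ring]
  have hEneg : Real.exp (-t/4) = (Real.exp (t/4))⁻¹ := by
    rw [← Real.exp_neg]; ring_nf
  have hEhalf : Real.exp (t/2) = (Real.exp (t/4))^2 := by
    rw [← Real.exp_nat_mul]; norm_num; ring_nf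
  have hEneghalf : Real.exp (-t/2) = ((Real.exp (t/4))^2)⁻¹ := by
    rw [← Real.exp_nat_mul, ← Real.exp_neg]; norm_num; ring_nf
  have hs2' : ((Real.sqrt 2 : ℝ) : ℂ)^2 = 2 := by rw [sq]; exact hs2
  have hs4 : ((Real.sqrt 2 : ℝ) : ℂ)^4 = 4 := by
    rw [show ((Real.sqrt 2 : ℝ) : ℂ)^4 = (((Real.sqrt 2 : ℝ) : ℂ)^2)^2 by ring, hs2']; norm_num
  have hs6 : ((Real.sqrt 2 : ℝ) : ℂ)^6 = 8 := by
    rw [show ((Real.sqrt 2 : ℝ) : ℂ)^6 = (((Real.sqrt 2 : ℝ) : ℂ)^2)^3 by ring, hs2']; norm_num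
  have hinv : (PsiM t)⁻¹ = !![((Real.exp (t / 4) / Real.sqrt 2 : ℝ) : ℂ),
      ((Real.exp (-t / 4) / Real.sqrt 2 : ℝ) : ℂ);
      Complex.I * ((Real.exp (t / 4) / Real.sqrt 2 : ℝ) : ℂ),
      -Complex.I * ((Real.exp (-t / 4) / Real.sqrt 2 : ℝ) : ℂ)] := by
    rw [Matrix.inv_eq_left_inv]
    ext i j
    fin_cases i <;> fin_cases j <;>
      simp [PsiM, Matrix.mul_apply, Fin.sum_univ_two, hEneg, hEhalf, hEneghalf] <;> push_cast <;>
      (try field_simp [Complex.exp_ne_zero, hsne]) <;> (try ring_nf) <;>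
      (try simp [hs2', hs4, hs6, Complex.I_sq]) <;> (try ring_nf) <;>
      (try field_simp [Complex.exp_ne_zero]) <;> (try ring)
  rw [hP, hUval, hRval, hinv]
  refine ⟨?_, ?_, ?_, ?_⟩
  · ext i j
    fin_cases i <;> fin_cases j <;>
      simp [Matrix.mul_apply, Fin.sum_univ_two, Matrix.smul_apply, hEneg, hEhalf, hEneghalf] <;> push_cast <;>
      (try field_simp [Complex.exp_ne_zero, hsne]) <;> (try ring_nf) <;>
      (try simp [hs2', hs4, hs6, Complex.I_sq]) <;> (try ring_nf) <;>
      (try field_simp [Complex.exp_ne_zero]) <;> (try ring)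
  · ext i j
    fin_cases i <;> fin_cases j <;>
      simp [Matrix.mul_apply, Fin.sum_univ_two, Matrix.smul_apply, R1M, hEneg, hEhalf, hEneghalf] <;> push_cast <;>
      (try field_simp [Complex.exp_ne_zero, hsne]) <;> (try ring_nf) <;>
      (try simp [hs2', hs4, hs6, Complex.I_sq]) <;> (try ring_nf) <;>
      (try field_simp [Complex.exp_ne_zero]) <;> (try ring)
  · simp [Matrix.mul_apply, Fin.sum_univ_two, Matrix.smul_apply, R1M, hEneg, hEhalf, hEneghalf]
    push_cast <;>
    (try field_simp [Complex.exp_ne_zero, hsne]) <;> (try ring_nf) <;>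
      (try simp [hs2', hs4, hs6, Complex.I_sq]) <;> (try ring_nf) <;>
      (try field_simp [Complex.exp_ne_zero]) <;> (try ring)
  · simp [Matrix.mul_apply, Fin.sum_univ_two, Matrix.smul_apply, R1M, hEneg, hEhalf, hEneghalf]
    push_cast <;>
    (try field_simp [Complex.exp_ne_zero, hsne]) <;> (try ring_nf) <;>
      (try simp [hs2', hs4, hs6, Complex.I_sq]) <;> (try ring_nf) <;>
      (try field_simp [Complex.exp_ne_zero]) <;> (try ring)
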